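/- Let D > 0 and let (u, v) ∈ ℝ² with u² + v² = 1. Define b_h(ξ_x, ξ_y) = (8/9)·[cos(2π√3·D·ξ_x) + cos(2πD·((√3/2)·ξ_x + (3/2)·ξ_y)) + cos(2πD·((√3/2)·ξ_x − (3/2)·ξ_y))] − 2/3. Then the dispersion ratio of the hexagonal waveguide mesh along the direction (u, v) tends to 1/√2 at dc: the function t ↦ (1/(4πD·t))·arctan(√(4 − b_h(t·u, t·v)²)/b_h(t·u, t·v)) tends to 1/√2 as t → 0⁺. -/

import Mathlib

open Real Filter Set

lemma sin_div_lim' : Filter.Tendsto (fun x : ℝ => Real.sin x / x)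
    (nhdsWithin 0 {(0:ℝ)}ᶜ) (nhds 1) := by
  have h := Real.hasDerivAt_sin 0
  rw [hasDerivAt_iff_tendsto_slope] at h
  simp only [Real.cos_zero] at h
  refine h.congr fun x => ?_
  simp [slope_fun_def, div_eq_inv_mul]

lemma arctan_div_lim' : Filter.Tendsto (fun x : ℝ => Real.arctan x / x)
    (nhdsWithin 0 {(0:ℝ)}ᶜ) (nhds 1) := by
  have h := Real.hasDerivAt_arctan 0
  rw [hasDerivAt_iff_tendsto_slope] at h
  norm_num at h
  refine h.congr fun x => ?_
  simp [slope_fun_def, div_eq_inv_mul]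

lemma one_sub_cos_lim' (a : ℝ) : Filter.Tendsto (fun t : ℝ => (1 - Real.cos (a * t)) / t ^ 2)
    (nhdsWithin 0 (Set.Ioi 0)) (nhds (a ^ 2 / 2)) := by
  rcases eq_or_ne a 0 with rfl | ha
  · simpa using (tendsto_const_nhds : Filter.Tendsto (fun _ : ℝ => (0:ℝ))
      (nhdsWithin 0 (Set.Ioi 0)) (nhds 0))
  · have hs : Filter.Tendsto (fun t : ℝ => a * t / 2) (nhdsWithin 0 (Set.Ioi 0))
        (nhdsWithin 0 {(0:ℝ)}ᶜ) := by
      rw [tendsto_nhdsWithin_iff]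
      constructor
      · have h1 : Filter.Tendsto (fun t : ℝ => a * t / 2) (nhds 0) (nhds (a * 0 / 2)) :=
          ((continuous_const.mul continuous_id).div_const 2).tendsto 0
        simpa using h1.mono_left nhdsWithin_le_nhds
      · filter_upwards [self_mem_nhdsWithin] with t ht
        simp only [Set.mem_compl_iff, Set.mem_singleton_iff]
        exact div_ne_zero (mul_ne_zero ha (ne_of_gt ht)) two_ne_zero
    have hmain : Filter.Tendsto
        (fun t : ℝ => a ^ 2 / 2 * (Real.sin (a * t / 2) / (a * t / 2)) ^ 2)
        (nhdsWithin 0 (Set.Ioi 0)) (nhds (a ^ 2 / 2)) := by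
      have h2 := ((sin_div_lim'.comp hs).pow 2).const_mul (a ^ 2 / 2)
      simpa using h2
    refine hmain.congr' ?_
    filter_upwards [self_mem_nhdsWithin] with t ht
    have ht0 : t ≠ 0 := ne_of_gt ht
    have key : ∀ x : ℝ, Real.cos (2 * x) = 1 - 2 * Real.sin x ^ 2 := by
      intro x
      rw [Real.cos_two_mul]
      nlinarith [Real.sin_sq_add_cos_sq x]
    have hcos : Real.cos (a * t) = 1 - 2 * Real.sin (a * t / 2) ^ 2 := by
      conv_lhs => rw [show a * t = 2 * (a * t / 2) by ring]
      exact key _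
    rw [hcos]
    field_simp
    ring

/-- The dispersion ratio of the hexagonal waveguide mesh (for which `α_h = 2`) along any
unit direction `(u, v)` tends to `1/√2` at dc. -/
theorem stmt8 (D u v : ℝ) (hD : 0 < D) (huv : u ^ 2 + v ^ 2 = 1)
    (b : ℝ → ℝ → ℝ)
    (hb : ∀ ξx ξy, b ξx ξy = (8 / 9) * (Real.cos (2 * π * Real.sqrt 3 * D * ξx) +
      Real.cos (2 * π * D * (Real.sqrt 3 / 2 * ξx + 3 / 2 * ξy)) +
      Real.cos (2 * π * D * (Real.sqrt 3 / 2 * ξx - 3 / 2 * ξy))) - 2 / 3) :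
    Filter.Tendsto (fun t : ℝ => (1 / (4 * π * D * t)) *
        Real.arctan (Real.sqrt (4 - (b (t * u) (t * v)) ^ 2) / b (t * u) (t * v)))
      (nhdsWithin 0 (Set.Ioi 0)) (nhds (1 / Real.sqrt 2)) := by
  set l := nhdsWithin (0:ℝ) (Set.Ioi 0) with hl
  set a1 := 2 * π * Real.sqrt 3 * D * u with ha1
  set a2 := 2 * π * D * (Real.sqrt 3 / 2 * u + 3 / 2 * v) with ha2
  set a3 := 2 * π * D * (Real.sqrt 3 / 2 * u - 3 / 2 * v) with ha3
  have hbt : ∀ t : ℝ, b (t * u) (t * v) =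
      8 / 9 * (Real.cos (a1 * t) + Real.cos (a2 * t) + Real.cos (a3 * t)) - 2 / 3 := by
    intro t
    rw [hb]
    rw [show 2 * π * Real.sqrt 3 * D * (t * u) = a1 * t by rw [ha1]; ring,
      show 2 * π * D * (Real.sqrt 3 / 2 * (t * u) + 3 / 2 * (t * v)) = a2 * t by
        rw [ha2]; ring,
      show 2 * π * D * (Real.sqrt 3 / 2 * (t * u) - 3 / 2 * (t * v)) = a3 * t by
        rw [ha3]; ring]
  have h3 : Real.sqrt 3 ^ 2 = 3 := Real.sq_sqrt (by norm_num)
  have hpi : (0:ℝ) < π := Real.pi_pos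
  -- the curvature limit
  have hsum : Filter.Tendsto (fun t : ℝ => (2 - b (t * u) (t * v)) / t ^ 2) l
      (nhds (8 * π ^ 2 * D ^ 2)) := by
    have h := (((one_sub_cos_lim' a1).add (one_sub_cos_lim' a2)).add
      (one_sub_cos_lim' a3)).const_mul ((8:ℝ)/9)
    have hval : (8:ℝ)/9 * (a1 ^ 2 / 2 + a2 ^ 2 / 2 + a3 ^ 2 / 2) = 8 * π ^ 2 * D ^ 2 := by
      rw [ha1, ha2, ha3]
      linear_combination (8/3 * π^2 * D^2 * u^2) * h3 + (8 * π^2 * D^2) * huv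
    rw [hval] at h
    exact h.congr fun t => by rw [hbt t]; ring
  -- b tends to 2
  have hb2 : Filter.Tendsto (fun t : ℝ => b (t * u) (t * v)) l (nhds 2) := by
    have hc : Continuous (fun t : ℝ =>
        8 / 9 * (Real.cos (a1 * t) + Real.cos (a2 * t) + Real.cos (a3 * t)) - 2 / 3) := by
      fun_prop
    have := (hc.tendsto 0).mono_left (nhdsWithin_le_nhds (s := Set.Ioi (0:ℝ)))
    simp only [mul_zero, Real.cos_zero] at this
    norm_num at this
    exact this.congr fun t => (hbt t).symm
  have hDpos : (0:ℝ) < 8 * π ^ 2 * D ^ 2 := by positivity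
  -- eventual bounds
  have hevt : ∀ᶠ t in l, (0:ℝ) < t := self_mem_nhdsWithin
  have hev2 : ∀ᶠ t in l, b (t * u) (t * v) < 2 := by
    filter_upwards [hsum.eventually (eventually_gt_nhds hDpos), hevt] with t hq ht
    have ht2 : (0:ℝ) < t ^ 2 := by positivity
    nlinarith [mul_pos hq ht2, div_mul_cancel₀ (2 - b (t * u) (t * v)) (ne_of_gt ht2)]
  have hev1 : ∀ᶠ t in l, (1:ℝ) < b (t * u) (t * v) :=
    hb2.eventually (eventually_gt_nhds one_lt_two)
  -- (4 - b^2)/t^2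
  have hq : Filter.Tendsto (fun t : ℝ => (4 - (b (t * u) (t * v)) ^ 2) / t ^ 2) l
      (nhds (32 * π ^ 2 * D ^ 2)) := by
    have h := hsum.mul (hb2.const_add 2)
    have : (8 * π ^ 2 * D ^ 2) * (2 + 2) = 32 * π ^ 2 * D ^ 2 := by ring
    rw [this] at h
    exact h.congr fun t => by ring
  -- sqrt limit
  have hsq : Filter.Tendsto (fun t : ℝ => Real.sqrt ((4 - (b (t * u) (t * v)) ^ 2) / t ^ 2)) l
      (nhds (4 * Real.sqrt 2 * π * D)) := by
    have h := (Real.continuous_sqrt.tendsto _).comp hq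
    have hv : Real.sqrt (32 * π ^ 2 * D ^ 2) = 4 * Real.sqrt 2 * π * D := by
      rw [show 32 * π ^ 2 * D ^ 2 = (4 * Real.sqrt 2 * π * D) ^ 2 by
        have h2 : Real.sqrt 2 ^ 2 = 2 := Real.sq_sqrt (by norm_num)
        linear_combination (-16 * π^2 * D^2) * h2]
      exact Real.sqrt_sq (by positivity)
    rw [hv] at h
    exact h
  -- y/t limit
  have hyt : Filter.Tendsto (fun t : ℝ =>
      (Real.sqrt (4 - (b (t * u) (t * v)) ^ 2) / b (t * u) (t * v)) / t) l
      (nhds (2 * Real.sqrt 2 * π * D)) := by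
    have h := hsq.div hb2 (by norm_num)
    have : (4 * Real.sqrt 2 * π * D) / 2 = 2 * Real.sqrt 2 * π * D := by ring
    rw [this] at h
    refine h.congr' ?_
    filter_upwards [hevt, hev1, hev2] with t ht h1 h2
    have h4 : (0:ℝ) ≤ 4 - (b (t * u) (t * v)) ^ 2 := by nlinarith
    simp only [Pi.div_apply]
    rw [Real.sqrt_div h4 (t ^ 2), Real.sqrt_sq ht.le]
    ring
  -- y tends to 0, and is eventually positive
  have htid : Filter.Tendsto (fun t : ℝ => t) l (nhds 0) :=
    Filter.tendsto_id.mono_left nhdsWithin_le_nhds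
  have hy0 : Filter.Tendsto (fun t : ℝ =>
      Real.sqrt (4 - (b (t * u) (t * v)) ^ 2) / b (t * u) (t * v)) l (nhds 0) := by
    have h := hyt.mul htid
    rw [mul_zero] at h
    refine h.congr' ?_
    filter_upwards [hevt] with t ht
    exact div_mul_cancel₀ _ (ne_of_gt ht)
  have hypos : ∀ᶠ t in l,
      0 < Real.sqrt (4 - (b (t * u) (t * v)) ^ 2) / b (t * u) (t * v) := by
    filter_upwards [hev1, hev2] with t h1 h2
    have h4 : (0:ℝ) < 4 - (b (t * u) (t * v)) ^ 2 := by nlinarith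
    exact div_pos (Real.sqrt_pos.2 h4) (by linarith)
  -- arctan(y)/y → 1
  have hynz : Filter.Tendsto (fun t : ℝ =>
      Real.sqrt (4 - (b (t * u) (t * v)) ^ 2) / b (t * u) (t * v)) l
      (nhdsWithin 0 {(0:ℝ)}ᶜ) := by
    rw [tendsto_nhdsWithin_iff]
    refine ⟨hy0, ?_⟩
    filter_upwards [hypos] with t ht
    simp only [Set.mem_compl_iff, Set.mem_singleton_iff]
    exact ne_of_gt ht
  have har : Filter.Tendsto (fun t : ℝ =>
      Real.arctan (Real.sqrt (4 - (b (t * u) (t * v)) ^ 2) / b (t * u) (t * v)) /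
      (Real.sqrt (4 - (b (t * u) (t * v)) ^ 2) / b (t * u) (t * v))) l (nhds 1) :=
    arctan_div_lim'.comp hynz
  -- assemble
  have hfin := (har.mul hyt).const_mul (1 / (4 * π * D))
  have hval : 1 / (4 * π * D) * (1 * (2 * Real.sqrt 2 * π * D)) = 1 / Real.sqrt 2 := by
    have h2 : Real.sqrt 2 * Real.sqrt 2 = 2 := Real.mul_self_sqrt (by norm_num)
    have hs2 : Real.sqrt 2 ≠ 0 := by positivity
    field_simp
    linear_combination 2 * h2
  rw [hval] at hfin
  have assemble : ∀ (A Y t c : ℝ), Y ≠ 0 → t ≠ 0 → c ≠ 0 →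
      1 / c * (A / Y * (Y / t)) = 1 / (c * t) * A := by
    intro A Y t c hY ht hc
    field_simp
  refine hfin.congr' ?_
  filter_upwards [hevt, hypos] with t ht hy
  have hynz' : Real.sqrt (4 - (b (t * u) (t * v)) ^ 2) / b (t * u) (t * v) ≠ 0 := ne_of_gt hy
  have := assemble (Real.arctan (Real.sqrt (4 - (b (t * u) (t * v)) ^ 2) / b (t * u) (t * v)))
    (Real.sqrt (4 - (b (t * u) (t * v)) ^ 2) / b (t * u) (t * v)) t (4 * π * D)
    hynz' (ne_of_gt ht) (by positivity)
  rw [this]
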